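/- Let d ≥ 3 be an integer and let a, b, a', b' be nonzero integers. The binary forms a·X^d + b·Y^d and a'·X^d + b'·Y^d are isomorphic under the GL(2,ℚ) action if and only if at least one of the following two conditions holds: (1) both ratios a/a' and b/b' are d-th powers of rational numbers; (2) both ratios a/b' and b/a' are d-th powers of rational numbers. -/

import Mathlib

open MvPolynomial

/-- The action of a matrix `γ = (a₁ a₂; a₃ a₄)` on a binary form `F`:
`(F ∘ γ)(X, Y) = F(a₁X + a₂Y, a₃X + a₄Y)`. -/
noncomputable def formComp (γ : Matrix (Fin 2) (Fin 2) ℚ) (f : MvPolynomial (Fin 2) ℚ) :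
    MvPolynomial (Fin 2) ℚ :=
  MvPolynomial.bind₁ (fun i => C (γ i 0) * X 0 + C (γ i 1) * X 1) f

/-- Two binary forms `F` and `G` are isomorphic if there exists `γ ∈ GL(2,ℚ)` with
`F ∘ γ = G`. -/
def IsIsomorphicForm (f g : MvPolynomial (Fin 2) ℚ) : Prop :=
  ∃ γ : Matrix (Fin 2) (Fin 2) ℚ, γ.det ≠ 0 ∧ formComp γ f = g

/-- The binomial binary form `a X^d + b Y^d` (viewed over `ℚ`). -/
noncomputable def binomialForm (d : ℕ) (a b : ℤ) : MvPolynomial (Fin 2) ℚ :=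
  C (a : ℚ) * X 0 ^ d + C (b : ℚ) * X 1 ^ d

lemma coeff_linear_pow (p q : ℚ) (d k : ℕ) :
    ((Polynomial.C p * Polynomial.X + Polynomial.C q : Polynomial ℚ) ^ d).coeff k
      = p ^ k * q ^ (d - k) * d.choose k := by
  rcases le_or_gt k d with hk | hk
  · rw [add_pow, Polynomial.finset_sum_coeff]
    have : ∀ i ∈ Finset.range (d + 1),
        ((Polynomial.C p * Polynomial.X) ^ i * Polynomial.C q ^ (d - i) * (d.choose i : Polynomial ℚ)).coeff k
          = if i = k then p ^ k * q ^ (d - k) * d.choose k else 0 := by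
      intro i _
      have : ((Polynomial.C p * Polynomial.X) ^ i * Polynomial.C q ^ (d - i) * (d.choose i : Polynomial ℚ))
          = Polynomial.C (p ^ i * q ^ (d - i) * d.choose i) * Polynomial.X ^ i := by
        rw [mul_pow, ← Polynomial.C_pow, ← Polynomial.C_pow, map_mul, map_mul]
        rw [Polynomial.C_eq_natCast]
        ring
      rw [this, Polynomial.coeff_C_mul, Polynomial.coeff_X_pow]
      rcases eq_or_ne i k with h | h
      · simp [h]
      · simp [h, Ne.symm h]
    rw [Finset.sum_congr rfl this, Finset.sum_ite_eq' (Finset.range (d+1)) k]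
    simp [Nat.lt_succ_iff.mpr hk]
  · rw [Polynomial.coeff_eq_zero_of_natDegree_lt, Nat.choose_eq_zero_of_lt hk]
    · simp
    · calc ((Polynomial.C p * Polynomial.X + Polynomial.C q : Polynomial ℚ) ^ d).natDegree
          ≤ d * (Polynomial.C p * Polynomial.X + Polynomial.C q : Polynomial ℚ).natDegree :=
            Polynomial.natDegree_pow_le
        _ ≤ d * 1 := by
            gcongr
            exact (Polynomial.natDegree_add_le _ _).trans
              (by simpa using (Polynomial.natDegree_C_mul_le p Polynomial.X).trans (by simp))
        _ < _ := by simpa using hk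

lemma coeffEq (d : ℕ) (a b a' b' p q r s : ℚ)
    (h : ∀ x : ℚ, a * (p * x + q) ^ d + b * (r * x + s) ^ d = a' * x ^ d + b') (k : ℕ) :
    a * (p ^ k * q ^ (d - k)) * d.choose k + b * (r ^ k * s ^ (d - k)) * d.choose k
      = (Polynomial.C a' * Polynomial.X ^ d + Polynomial.C b' : Polynomial ℚ).coeff k := by
  have hPQ : (Polynomial.C a * (Polynomial.C p * Polynomial.X + Polynomial.C q) ^ d
      + Polynomial.C b * (Polynomial.C r * Polynomial.X + Polynomial.C s) ^ d : Polynomial ℚ)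
      = Polynomial.C a' * Polynomial.X ^ d + Polynomial.C b' := by
    apply Polynomial.funext
    intro x
    simpa using h x
  have := congrArg (fun P : Polynomial ℚ => P.coeff k) hPQ
  simpa [Polynomial.coeff_add, Polynomial.coeff_C_mul, coeff_linear_pow, mul_assoc] using this

/-- Proposition 3.1: for `d ≥ 3` and nonzero integers `a, b, a', b'`, the forms
`a X^d + b Y^d` and `a' X^d + b' Y^d` are `GL(2,ℚ)`-isomorphic if and only if either both
`a/a'` and `b/b'`, or both `a/b'` and `b/a'`, are `d`-th powers of rational numbers. -/
theorem binomialForm_isomorphic_iff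
    (d : ℕ) (hd : 3 ≤ d) (a b a' b' : ℤ)
    (ha : a ≠ 0) (hb : b ≠ 0) (ha' : a' ≠ 0) (hb' : b' ≠ 0) :
    IsIsomorphicForm (binomialForm d a b) (binomialForm d a' b') ↔
      ((∃ r : ℚ, (a : ℚ) / (a' : ℚ) = r ^ d) ∧ (∃ r : ℚ, (b : ℚ) / (b' : ℚ) = r ^ d)) ∨
      ((∃ r : ℚ, (a : ℚ) / (b' : ℚ) = r ^ d) ∧ (∃ r : ℚ, (b : ℚ) / (a' : ℚ) = r ^ d)) := by
  obtain ⟨e, rfl⟩ : ∃ e, d = e + 3 := ⟨d - 3, by omega⟩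
  set d := e + 3 with hd'
  have haQ : (a : ℚ) ≠ 0 := Int.cast_ne_zero.mpr ha
  have hbQ : (b : ℚ) ≠ 0 := Int.cast_ne_zero.mpr hb
  have haQ' : (a' : ℚ) ≠ 0 := Int.cast_ne_zero.mpr ha'
  have hbQ' : (b' : ℚ) ≠ 0 := Int.cast_ne_zero.mpr hb'
  constructor
  · rintro ⟨γ, hdet, hγ⟩
    set p := γ 0 0 with hp
    set q := γ 0 1 with hq
    set r := γ 1 0 with hr
    set s := γ 1 1 with hs
    have hdet2 : p * s - q * r ≠ 0 := by
      rwa [Matrix.det_fin_two] at hdet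
    -- evaluation identity
    have hev : ∀ x : ℚ, (a : ℚ) * (p * x + q) ^ d + (b : ℚ) * (r * x + s) ^ d
        = (a' : ℚ) * x ^ d + b' := by
      intro x
      have := congrArg (aeval (fun i : Fin 2 => if i = 0 then x else 1)) hγ
      rw [formComp, aeval_bind₁] at this
      simpa [binomialForm] using this
    have E := coeffEq d (a : ℚ) b a' b' p q r s hev
    have rhs_coeff : ∀ k : ℕ,
        (Polynomial.C (a' : ℚ) * Polynomial.X ^ d + Polynomial.C (b' : ℚ)).coeff k
          = (if k = d then (a' : ℚ) else 0) + (if k = 0 then (b' : ℚ) else 0) := by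
      intro k
      simp only [Polynomial.coeff_add, Polynomial.coeff_C_mul, Polynomial.coeff_X_pow,
        Polynomial.coeff_C, mul_ite, mul_one, mul_zero]
    have Ed : (a : ℚ) * p ^ d + b * r ^ d = a' := by
      have h1 := E d
      rw [rhs_coeff, if_pos rfl, if_neg (by omega), add_zero, Nat.choose_self, Nat.sub_self] at h1
      simpa using h1
    have E0 : (a : ℚ) * q ^ d + b * s ^ d = b' := by
      have h1 := E 0
      rw [rhs_coeff, if_neg (by omega), if_pos rfl, zero_add, Nat.choose_zero_right,
        Nat.sub_zero] at h1
      simpa using h1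
    have E1 : (a : ℚ) * p ^ (e + 2) * q + b * r ^ (e + 2) * s = 0 := by
      have h1 := E (e + 2)
      rw [rhs_coeff, if_neg (by omega), if_neg (by omega), add_zero] at h1
      have hsub : d - (e + 2) = 1 := by omega
      rw [hsub] at h1
      have hc : ((d.choose (e + 2) : ℚ)) ≠ 0 :=
        Nat.cast_ne_zero.mpr (Nat.choose_pos (by omega)).ne'
      apply mul_right_cancel₀ hc
      rw [zero_mul]
      linear_combination h1
    have E2 : (a : ℚ) * p ^ (e + 1) * q ^ 2 + b * r ^ (e + 1) * s ^ 2 = 0 := by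
      have h1 := E (e + 1)
      rw [rhs_coeff, if_neg (by omega), if_neg (by omega), add_zero] at h1
      have hsub : d - (e + 1) = 2 := by omega
      rw [hsub] at h1
      have hc : ((d.choose (e + 1) : ℚ)) ≠ 0 :=
        Nat.cast_ne_zero.mpr (Nat.choose_pos (by omega)).ne'
      apply mul_right_cancel₀ hc
      rw [zero_mul]
      linear_combination h1
    -- p*q = 0
    have hpq : p * q = 0 := by
      by_contra h
      obtain ⟨hp0, hq0⟩ := mul_ne_zero_iff.mp h
      have hA : (a : ℚ) * p ^ (e + 1) * q ≠ 0 :=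
        mul_ne_zero (mul_ne_zero haQ (pow_ne_zero _ hp0)) hq0
      have key : ((a : ℚ) * p ^ (e + 1) * q) * (p * s - q * r) = 0 := by
        linear_combination s * E1 - r * E2
      exact hdet2 ((mul_eq_zero.mp key).resolve_left hA)
    -- r*s = 0
    have hrs : r * s = 0 := by
      by_contra h
      obtain ⟨hr0, hs0⟩ := mul_ne_zero_iff.mp h
      have hB : (b : ℚ) * r ^ (e + 1) * s ≠ 0 :=
        mul_ne_zero (mul_ne_zero hbQ (pow_ne_zero _ hr0)) hs0
      have key : ((b : ℚ) * r ^ (e + 1) * s) * (p * s - q * r) = 0 := by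
        linear_combination -q * E1 + p * E2
      exact hdet2 ((mul_eq_zero.mp key).resolve_left hB)
    rcases mul_eq_zero.mp hpq with hp0 | hq0
    · -- p = 0 : antidiagonal case
      have hq0 : q ≠ 0 := by
        intro h; apply hdet2; rw [hp0, h]; ring
      have hr0 : r ≠ 0 := by
        intro h; apply hdet2; rw [hp0, h]; ring
      have hs0 : s = 0 := (mul_eq_zero.mp hrs).resolve_left hr0
      right
      have hEa : (b : ℚ) * r ^ d = a' := by
        rw [← Ed, hp0]; simp [hd']
      have hEb : (a : ℚ) * q ^ d = b' := by
        rw [← E0, hs0]; simp [hd']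
      constructor
      · exact ⟨q⁻¹, by rw [← hEb]; field_simp; rw [one_div, inv_pow, mul_inv_cancel₀ (pow_ne_zero _ hq0)]⟩
      · exact ⟨r⁻¹, by rw [← hEa]; field_simp; rw [one_div, inv_pow, mul_inv_cancel₀ (pow_ne_zero _ hr0)]⟩
    · -- q = 0 : diagonal case
      have hp0 : p ≠ 0 := by
        intro h; apply hdet2; rw [hq0, h]; ring
      have hs0 : s ≠ 0 := by
        intro h; apply hdet2; rw [hq0, h]; ring
      have hr0 : r = 0 := (mul_eq_zero.mp hrs).resolve_right hs0
      left
      have hEa : (a : ℚ) * p ^ d = a' := by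
        rw [← Ed, hr0]; simp [hd']
      have hEb : (b : ℚ) * s ^ d = b' := by
        rw [← E0, hq0]; simp [hd']
      constructor
      · exact ⟨p⁻¹, by rw [← hEa]; field_simp; rw [one_div, inv_pow, mul_inv_cancel₀ (pow_ne_zero _ hp0)]⟩
      · exact ⟨s⁻¹, by rw [← hEb]; field_simp; rw [one_div, inv_pow, mul_inv_cancel₀ (pow_ne_zero _ hs0)]⟩
  · rintro (⟨⟨u, hu⟩, ⟨v, hv⟩⟩ | ⟨⟨u, hu⟩, ⟨v, hv⟩⟩)
    · have hu0 : u ≠ 0 := by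
        intro h; rw [h] at hu; simp [hd'] at hu
        exact hu.elim ha ha'
      have hv0 : v ≠ 0 := by
        intro h; rw [h] at hv; simp [hd'] at hv
        exact hv.elim hb hb'
      refine ⟨!![u⁻¹, 0; 0, v⁻¹], ?_, ?_⟩
      · rw [Matrix.det_fin_two]
        simp [hu0, hv0]
      · have h1 : (a : ℚ) * (u⁻¹) ^ d = a' := by
          have : (a : ℚ) = a' * u ^ d := by
            field_simp at hu; linarith [hu]
          rw [this]; field_simp; rw [one_div, inv_pow, mul_inv_cancel₀ (pow_ne_zero _ hu0)]
        have h2 : (b : ℚ) * (v⁻¹) ^ d = b' := by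
          have : (b : ℚ) = b' * v ^ d := by
            field_simp at hv; linarith [hv]
          rw [this]; field_simp; rw [one_div, inv_pow, mul_inv_cancel₀ (pow_ne_zero _ hv0)]
        simp only [formComp, binomialForm, map_add, map_mul, map_pow, bind₁_C_right,
          bind₁_X_right, Matrix.of_apply, Matrix.cons_val', Matrix.cons_val_zero,
          Matrix.cons_val_one, Matrix.head_cons, Matrix.empty_val', Matrix.cons_val_fin_one,
          Matrix.head_fin_const, map_zero, zero_mul, add_zero, zero_add]
        rw [mul_pow, mul_pow, ← mul_assoc, ← mul_assoc, ← map_pow, ← map_pow, ← map_mul,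
          ← map_mul, h1, h2]
    · have hu0 : u ≠ 0 := by
        intro h; rw [h] at hu; simp [hd'] at hu
        exact hu.elim ha hb'
      have hv0 : v ≠ 0 := by
        intro h; rw [h] at hv; simp [hd'] at hv
        exact hv.elim hb ha'
      refine ⟨!![0, u⁻¹; v⁻¹, 0], ?_, ?_⟩
      · rw [Matrix.det_fin_two]
        simp [hu0, hv0]
      · have h1 : (a : ℚ) * (u⁻¹) ^ d = b' := by
          have : (a : ℚ) = b' * u ^ d := by
            field_simp at hu; linarith [hu]
          rw [this]; field_simp; rw [one_div, inv_pow, mul_inv_cancel₀ (pow_ne_zero _ hu0)]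
        have h2 : (b : ℚ) * (v⁻¹) ^ d = a' := by
          have : (b : ℚ) = a' * v ^ d := by
            field_simp at hv; linarith [hv]
          rw [this]; field_simp; rw [one_div, inv_pow, mul_inv_cancel₀ (pow_ne_zero _ hv0)]
        simp only [formComp, binomialForm, map_add, map_mul, map_pow, bind₁_C_right,
          bind₁_X_right, Matrix.of_apply, Matrix.cons_val', Matrix.cons_val_zero,
          Matrix.cons_val_one, Matrix.head_cons, Matrix.empty_val', Matrix.cons_val_fin_one,
          Matrix.head_fin_const, map_zero, zero_mul, add_zero, zero_add]
        rw [mul_pow, mul_pow, ← mul_assoc, ← mul_assoc, ← map_pow, ← map_pow, ← map_mul,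
          ← map_mul, h1, h2]
        ring
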